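/- Let 0 ≤ α ≤ β be reals and let Δ : ℝ → ℝ satisfy Δ(0) = 0 and be slope-restricted on [α,β], i.e. α(x−y)² ≤ (Δ(x)−Δ(y))(x−y) ≤ β(x−y)² for all x, y ∈ ℝ. Define g : ℝ → ℝ by g(x) = ∫_0^x Δ(t) dt. Then g is differentiable with derivative Δ, g(0) = 0, g(x) ≥ (α/2)x² ≥ 0 for all x, the function x ↦ g(x) − (α/2)x² is convex, and the function x ↦ (β/2)x² − g(x) is convex. -/

import Mathlib

/-- Construction of the nonnegative convex potential of a scalar slope-restricted
nonlinearity: if `Δ : ℝ → ℝ` satisfies `Δ(0) = 0` and is slope-restricted on `[α,β]`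
(`0 ≤ α ≤ β`), then `g(x) = ∫_0^x Δ(t) dt` is differentiable with derivative `Δ`,
vanishes at `0`, satisfies `g(x) ≥ (α/2)x² ≥ 0`, and both `g − (α/2)(·)²` and
`(β/2)(·)² − g` are convex. -/
theorem slope_restricted_potential
    (α β : ℝ) (hα : 0 ≤ α) (hαβ : α ≤ β)
    (Δ : ℝ → ℝ) (hΔ_zero : Δ 0 = 0)
    (hslope : ∀ x y : ℝ,
      α * (x - y) ^ 2 ≤ (Δ x - Δ y) * (x - y) ∧ (Δ x - Δ y) * (x - y) ≤ β * (x - y) ^ 2)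
    (g : ℝ → ℝ) (hg : ∀ x : ℝ, g x = ∫ t in (0 : ℝ)..x, Δ t) :
    (∀ x : ℝ, HasDerivAt g (Δ x) x) ∧
    g 0 = 0 ∧
    (∀ x : ℝ, α / 2 * x ^ 2 ≤ g x ∧ 0 ≤ α / 2 * x ^ 2) ∧
    ConvexOn ℝ Set.univ (fun x : ℝ => g x - α / 2 * x ^ 2) ∧
    ConvexOn ℝ Set.univ (fun x : ℝ => β / 2 * x ^ 2 - g x) := by
  have hβ : 0 ≤ β := le_trans hα hαβ
  -- Δ is Lipschitz with constant β, hence continuous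
  have hlip : LipschitzWith β.toNNReal Δ := by
    apply LipschitzWith.of_dist_le_mul
    intro x y
    rw [Real.dist_eq, Real.dist_eq, Real.coe_toNNReal β hβ]
    rcases eq_or_ne x y with rfl | hne
    · simp
    · have hx : |x - y| > 0 := abs_pos.mpr (sub_ne_zero.mpr hne)
      have h1 := (hslope x y).1
      have h2 := (hslope x y).2
      have hnn : 0 ≤ (Δ x - Δ y) * (x - y) :=
        le_trans (by positivity) h1
      have habs : |Δ x - Δ y| * |x - y| ≤ β * |x - y| ^ 2 := by
        calc |Δ x - Δ y| * |x - y| = |(Δ x - Δ y) * (x - y)| := (abs_mul _ _).symm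
          _ = (Δ x - Δ y) * (x - y) := abs_of_nonneg hnn
          _ ≤ β * (x - y) ^ 2 := h2
          _ = β * |x - y| ^ 2 := by rw [sq_abs]
      have : |Δ x - Δ y| * |x - y| ≤ (β * |x - y|) * |x - y| := by
        rw [mul_assoc, ← sq]; exact habs
      exact le_of_mul_le_mul_right this hx
  have hcont : Continuous Δ := hlip.continuous
  have hgfun : g = fun x => ∫ t in (0 : ℝ)..x, Δ t := funext hg
  have hderiv : ∀ x : ℝ, HasDerivAt g (Δ x) x := by
    intro x
    rw [hgfun]
    exact (hcont.integral_hasStrictDerivAt 0 x).hasDerivAt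
  have hg0 : g 0 = 0 := by rw [hg 0, intervalIntegral.integral_same]
  -- derivative facts for the two auxiliary functions
  have hd1 : ∀ x : ℝ, HasDerivAt (fun x : ℝ => g x - α / 2 * x ^ 2) (Δ x - α * x) x := by
    intro x
    have h2 : HasDerivAt (fun x : ℝ => α / 2 * x ^ 2) (α * x) x := by
      have := (hasDerivAt_pow 2 x).const_mul (α / 2)
      convert this using 1
      · rfl
      · rfl
      · ring
    exact (hderiv x).sub h2
  have hd2 : ∀ x : ℝ, HasDerivAt (fun x : ℝ => β / 2 * x ^ 2 - g x) (β * x - Δ x) x := by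
    intro x
    have h2 : HasDerivAt (fun x : ℝ => β / 2 * x ^ 2) (β * x) x := by
      have := (hasDerivAt_pow 2 x).const_mul (β / 2)
      convert this using 1
      · rfl
      · rfl
      · ring
    exact h2.sub (hderiv x)
  -- monotone derivatives
  have hmono1 : Monotone (fun x : ℝ => Δ x - α * x) := by
    intro x y hxy
    rcases eq_or_lt_of_le hxy with rfl | hlt
    · exact le_refl _
    · have h := (hslope y x).1
      have hyx : 0 < y - x := sub_pos.mpr hlt
      have : α * (y - x) ≤ Δ y - Δ x := by
        have := h
        nlinarith
      simp only
      nlinarith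
  have hmono2 : Monotone (fun x : ℝ => β * x - Δ x) := by
    intro x y hxy
    rcases eq_or_lt_of_le hxy with rfl | hlt
    · exact le_refl _
    · have h := (hslope y x).2
      have hyx : 0 < y - x := sub_pos.mpr hlt
      have : Δ y - Δ x ≤ β * (y - x) := by nlinarith
      simp only
      nlinarith
  -- convexity
  have hconv1 : ConvexOn ℝ Set.univ (fun x : ℝ => g x - α / 2 * x ^ 2) := by
    have hdiff : Differentiable ℝ (fun x : ℝ => g x - α / 2 * x ^ 2) :=
      fun x => (hd1 x).differentiableAt
    have hderiv_eq : deriv (fun x : ℝ => g x - α / 2 * x ^ 2) = fun x => Δ x - α * x :=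
      funext fun x => (hd1 x).deriv
    exact Monotone.convexOn_univ_of_deriv hdiff (hderiv_eq ▸ hmono1)
  have hconv2 : ConvexOn ℝ Set.univ (fun x : ℝ => β / 2 * x ^ 2 - g x) := by
    have hdiff : Differentiable ℝ (fun x : ℝ => β / 2 * x ^ 2 - g x) :=
      fun x => (hd2 x).differentiableAt
    have hderiv_eq : deriv (fun x : ℝ => β / 2 * x ^ 2 - g x) = fun x => β * x - Δ x :=
      funext fun x => (hd2 x).deriv
    exact Monotone.convexOn_univ_of_deriv hdiff (hderiv_eq ▸ hmono2)
  -- lower bound via tangent line at 0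
  have hlb : ∀ x : ℝ, α / 2 * x ^ 2 ≤ g x ∧ 0 ≤ α / 2 * x ^ 2 := by
    intro x
    refine ⟨?_, by positivity⟩
    set h : ℝ → ℝ := fun x : ℝ => g x - α / 2 * x ^ 2 with hh
    have hh0 : h 0 = 0 := by simp [hh, hg0]
    have hd0 : HasDerivAt h (0 : ℝ) 0 := by
      have := hd1 0
      simpa [hΔ_zero] using this
    have hnonneg : 0 ≤ h x := by
      rcases lt_trichotomy x 0 with hx | rfl | hx
      · have := hconv1.slope_le_of_hasDerivAt (Set.mem_univ x) (Set.mem_univ (0 : ℝ)) hx hd0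
        rw [slope_def_field, hh0] at this
        have hxne : x ≠ 0 := ne_of_lt hx
        have : (0 - h x) / (0 - x) ≤ 0 := this
        rw [zero_sub, zero_sub, neg_div_neg_eq] at this
        have hxneg : x < 0 := hx
        nlinarith [div_le_iff_of_neg hxneg |>.mp this]
      · simp [hh0]
      · have := hconv1.le_slope_of_hasDerivAt (Set.mem_univ (0 : ℝ)) (Set.mem_univ x) hx hd0
        rw [slope_def_field, hh0] at this
        have : 0 ≤ (h x - 0) / (x - 0) := this
        rw [sub_zero, sub_zero] at this
        nlinarith [le_div_iff₀ hx |>.mp this]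
    simpa [hh] using sub_nonneg.mp hnonneg
  exact ⟨hderiv, hg0, hlb, hconv1, hconv2⟩
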